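/- The matrix A^(1) is a normal matrix: A^(1) · (A^(1))^T = (A^(1))^T · A^(1). -/
import Mathlib


/-- The multiplicity matrix `A1` (for tensoring the irreducibles with `γ`) is a
normal matrix: `A1 * A1ᵀ = A1ᵀ * A1`.  (Its transpose is the analogous matrix `A3` for the
dual representation `γ*`, and `A1`, `A3` commute.) -/
theorem A1_normal {G : Type} [Group G] [Fintype G] {l : ℕ}
    (χ : Fin (l + 1) → G → ℂ) (χγ : G → ℂ)
    (horth : ∀ i i', ∑ g : G, (starRingEnd ℂ) (χ i g) * χ i' g =
      if i = i' then (Fintype.card G : ℂ) else 0)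
    (hconj : ∀ i g, (starRingEnd ℂ) (χ i g) = χ i g⁻¹)
    (A1 A3 : Matrix (Fin (l + 1)) (Fin (l + 1)) ℕ)
    (hA1 : ∀ j g, χγ g * χ j g = ∑ i, (A1 i j : ℂ) * χ i g)
    (hA3 : ∀ j g, χγ g⁻¹ * χ j g = ∑ i, (A3 i j : ℂ) * χ i g) :
    A1 * A1.transpose = A1.transpose * A1 := by
  classical
  have hcard : (Fintype.card G : ℂ) ≠ 0 := by
    exact_mod_cast Fintype.card_ne_zero
  -- extraction of coefficients via orthogonality
  have extract : ∀ (c : Fin (l + 1) → ℂ) (f : G → ℂ),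
      (∀ g, f g = ∑ i, c i * χ i g) → ∀ i,
        ∑ g : G, (starRingEnd ℂ) (χ i g) * f g = (Fintype.card G : ℂ) * c i := by
    intro c f hf i
    calc ∑ g : G, (starRingEnd ℂ) (χ i g) * f g
        = ∑ g : G, ∑ k, c k * ((starRingEnd ℂ) (χ i g) * χ k g) := by
          refine Finset.sum_congr rfl fun g _ => ?_
          rw [hf g, Finset.mul_sum]
          exact Finset.sum_congr rfl fun k _ => by ring
      _ = ∑ k, c k * ∑ g : G, (starRingEnd ℂ) (χ i g) * χ k g := by
          rw [Finset.sum_comm]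
          exact Finset.sum_congr rfl fun k _ => (Finset.mul_sum _ _ _).symm
      _ = (Fintype.card G : ℂ) * c i := by
          simp_rw [horth]
          simp [mul_comm]
  -- A3 is the transpose of A1
  have key1 : ∀ i j, (A1 i j : ℂ) = (A3 j i : ℂ) := by
    intro i j
    have h1 : ∑ g : G, (starRingEnd ℂ) (χ i g) * (χγ g * χ j g)
        = (Fintype.card G : ℂ) * (A1 i j : ℂ) :=
      extract (fun k => (A1 k j : ℂ)) (fun g => χγ g * χ j g) (fun g => hA1 j g) i
    have h3 : ∑ g : G, (starRingEnd ℂ) (χ j g) * (χγ g⁻¹ * χ i g)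
        = (Fintype.card G : ℂ) * (A3 j i : ℂ) :=
      extract (fun k => (A3 k i : ℂ)) (fun g => χγ g⁻¹ * χ i g) (fun g => hA3 i g) j
    have hsum : ∑ g : G, (starRingEnd ℂ) (χ j g) * (χγ g⁻¹ * χ i g)
        = ∑ g : G, (starRingEnd ℂ) (χ i g) * (χγ g * χ j g) := by
      rw [← Equiv.sum_comp (Equiv.inv G) (fun g => (starRingEnd ℂ) (χ j g) * (χγ g⁻¹ * χ i g))]
      refine Finset.sum_congr rfl fun g _ => ?_
      have e1 : (starRingEnd ℂ) (χ j ((Equiv.inv G) g)) = χ j g := by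
        simp only [Equiv.inv_apply, ← hconj]
        exact Complex.conj_conj _
      have e2 : χ i ((Equiv.inv G) g) = (starRingEnd ℂ) (χ i g) := by
        simp only [Equiv.inv_apply, hconj]
      simp only [Equiv.inv_apply, inv_inv] at e1 e2 ⊢
      rw [e1, e2]; ring
    have : (Fintype.card G : ℂ) * (A1 i j : ℂ) = (Fintype.card G : ℂ) * (A3 j i : ℂ) := by
      rw [← h1, ← h3, hsum]
    exact mul_left_cancel₀ hcard this
  -- A1 and A3 commute
  have key2 : ∀ i j, ∑ k, (A1 i k : ℂ) * (A3 k j : ℂ) = ∑ k, (A3 i k : ℂ) * (A1 k j : ℂ) := by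
    intro i j
    have hf1 : ∀ g, χγ g * (χγ g⁻¹ * χ j g)
        = ∑ i, (∑ k, (A1 i k : ℂ) * (A3 k j : ℂ)) * χ i g := by
      intro g
      calc χγ g * (χγ g⁻¹ * χ j g) = ∑ k, (A3 k j : ℂ) * (χγ g * χ k g) := by
            rw [hA3 j g, Finset.mul_sum]
            exact Finset.sum_congr rfl fun k _ => by ring
        _ = ∑ k, ∑ i, (A3 k j : ℂ) * ((A1 i k : ℂ) * χ i g) := by
            refine Finset.sum_congr rfl fun k _ => ?_
            rw [hA1 k g, Finset.mul_sum]
        _ = ∑ i, (∑ k, (A1 i k : ℂ) * (A3 k j : ℂ)) * χ i g := by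
            rw [Finset.sum_comm]
            refine Finset.sum_congr rfl fun i _ => ?_
            rw [Finset.sum_mul]
            exact Finset.sum_congr rfl fun k _ => by ring
    have hf2 : ∀ g, χγ g⁻¹ * (χγ g * χ j g)
        = ∑ i, (∑ k, (A3 i k : ℂ) * (A1 k j : ℂ)) * χ i g := by
      intro g
      calc χγ g⁻¹ * (χγ g * χ j g) = ∑ k, (A1 k j : ℂ) * (χγ g⁻¹ * χ k g) := by
            rw [hA1 j g, Finset.mul_sum]
            exact Finset.sum_congr rfl fun k _ => by ring
        _ = ∑ k, ∑ i, (A1 k j : ℂ) * ((A3 i k : ℂ) * χ i g) := by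
            refine Finset.sum_congr rfl fun k _ => ?_
            rw [hA3 k g, Finset.mul_sum]
        _ = ∑ i, (∑ k, (A3 i k : ℂ) * (A1 k j : ℂ)) * χ i g := by
            rw [Finset.sum_comm]
            refine Finset.sum_congr rfl fun i _ => ?_
            rw [Finset.sum_mul]
            exact Finset.sum_congr rfl fun k _ => by ring
    have e1 := extract _ _ hf1 i
    have e2 := extract _ _ hf2 i
    have hsame : ∑ g : G, (starRingEnd ℂ) (χ i g) * (χγ g * (χγ g⁻¹ * χ j g))
        = ∑ g : G, (starRingEnd ℂ) (χ i g) * (χγ g⁻¹ * (χγ g * χ j g)) :=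
      Finset.sum_congr rfl fun g _ => by ring
    have : (Fintype.card G : ℂ) * (∑ k, (A1 i k : ℂ) * (A3 k j : ℂ))
        = (Fintype.card G : ℂ) * (∑ k, (A3 i k : ℂ) * (A1 k j : ℂ)) := by
      rw [← e1, ← e2, hsame]
    exact mul_left_cancel₀ hcard this
  -- conclude
  ext i j
  have : ((A1 * A1.transpose) i j : ℂ) = ((A1.transpose * A1) i j : ℂ) := by
    simp only [Matrix.mul_apply, Matrix.transpose_apply]
    push_cast
    calc ∑ k, (A1 i k : ℂ) * (A1 j k : ℂ) = ∑ k, (A1 i k : ℂ) * (A3 k j : ℂ) :=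
          Finset.sum_congr rfl fun k _ => by rw [key1 j k]
      _ = ∑ k, (A3 i k : ℂ) * (A1 k j : ℂ) := key2 i j
      _ = ∑ k, (A1 k i : ℂ) * (A1 k j : ℂ) :=
          Finset.sum_congr rfl fun k _ => by rw [← key1 k i]
  exact_mod_cast this
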